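/- Let n ≥ 2 be an integer and λ, σ, s ∈ ℂ. For every smooth u : B → ℂ on the open unit ball B ⊂ ℝ^{n−1}, the identity P_σ((1−|Y|²)^s·log(1−|Y|²)·u) = log(1−|Y|²)·(1−|Y|²)^s·[ 4s(s−σ)(1−|Y|²)^{−1}u + P_{σ−2s}u ] + (1−|Y|²)^s·[ 4(2s−σ)(1−|Y|²)^{−1}u − 4(Eu + (2s − σ + (n−1)/2)u) ] holds at every point of B, where Eu(Y) = Σⱼ Yⱼ ∂ⱼu(Y). -/

import Mathlib

/-- `∂ⱼ` on functions on `ℝ^m`. -/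
noncomputable def pd {m : ℕ} (j : Fin m) (u : (Fin m → ℝ) → ℂ) (Y : Fin m → ℝ) : ℂ :=
  fderiv ℝ u Y (Pi.single j 1)


/-- The Euler vector field `E u (Y) = Σⱼ Yⱼ ∂ⱼ u (Y)`. -/
noncomputable def euler {m : ℕ} (u : (Fin m → ℝ) → ℂ) (Y : Fin m → ℝ) : ℂ :=
  ∑ j, (Y j : ℂ) * pd j u Y

/-- The Euclidean Laplacian `Δ u = Σⱼ ∂ⱼ² u`. -/
noncomputable def lap {m : ℕ} (u : (Fin m → ℝ) → ℂ) (Y : Fin m → ℝ) : ℂ :=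
  ∑ j, pd j (pd j u) Y

/-- The normal operator family `P_σ u = −(E + (n−1−σ))((E − σ)u) + Δ_Y u − λ u`
acting on functions on `ℝ^{n−1}` (the real form of
`(YD_Y − i(n−1−σ))(YD_Y + iσ) − Δ_Y − λ`). -/
noncomputable def Pop (n : ℕ) (lam σ : ℂ) (u : (Fin (n - 1) → ℝ) → ℂ)
    (Y : Fin (n - 1) → ℝ) : ℂ :=
  -(euler (fun Z => euler u Z - σ * u Z) Y
      + ((n : ℂ) - 1 - σ) * (euler u Y - σ * u Y))
    + lap u Y - lam * u Y

namespace S13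
open Complex Filter

variable {m : ℕ}

/-- derivative of sum of squares -/
lemma hasFDerivAt_q (Z : Fin m → ℝ) :
    HasFDerivAt (fun Z : Fin m → ℝ => ∑ j, (Z j) ^ 2)
      (∑ j : Fin m, (2 * Z j) • (ContinuousLinearMap.proj j : (Fin m → ℝ) →L[ℝ] ℝ)) Z := by
  apply HasFDerivAt.fun_sum
  intro j _
  have h := (ContinuousLinearMap.proj (R := ℝ) (φ := fun _ : Fin m => ℝ) j).hasFDerivAt (x := Z)
  simpa [pow_two, two_mul, add_smul] using h.fun_mul h

lemma q_eval (Z : Fin m → ℝ) (i : Fin m) :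
    (∑ j : Fin m, (2 * Z j) • (ContinuousLinearMap.proj j : (Fin m → ℝ) →L[ℝ] ℝ))
      (Pi.single i 1) = 2 * Z i := by
  simp [ContinuousLinearMap.sum_apply, Pi.single_apply]


lemma hasDerivAt_ofReal_log {t : ℝ} (ht : 0 < t) :
    HasDerivAt (fun x : ℝ => ((Real.log x : ℝ) : ℂ)) ((t : ℂ)⁻¹) t := by
  have h := (Real.hasDerivAt_log ht.ne').ofReal_comp
  simpa using h

lemma hasDerivAt_ofReal_cpow (a : ℂ) {t : ℝ} (ht : 0 < t) :
    HasDerivAt (fun x : ℝ => ((x : ℝ) : ℂ) ^ a) (a * (t : ℂ) ^ (a - 1)) t := by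
  have hlog : HasDerivAt (fun x : ℝ => ((Real.log x : ℝ) : ℂ) * a) ((t : ℂ)⁻¹ * a) t :=
    (hasDerivAt_ofReal_log ht).mul_const a
  have hexp := hlog.cexp
  have hev : (fun x : ℝ => ((x : ℝ) : ℂ) ^ a)
      =ᶠ[nhds t] (fun x : ℝ => Complex.exp (((Real.log x : ℝ) : ℂ) * a)) := by
    filter_upwards [eventually_gt_nhds ht] with x hx
    rw [Complex.cpow_def_of_ne_zero (by exact_mod_cast hx.ne'), Complex.ofReal_log hx.le]
  have h2 := hexp.congr_of_eventuallyEq hev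
  have hval : Complex.exp (((Real.log t : ℝ) : ℂ) * a) = (t : ℂ) ^ a := by
    rw [Complex.ofReal_log ht.le, ← Complex.cpow_def_of_ne_zero (by exact_mod_cast ht.ne')]
  rw [hval] at h2
  have : (t : ℂ) ^ a * ((t : ℂ)⁻¹ * a) = a * (t : ℂ) ^ (a - 1) := by
    have htne : (t : ℂ) ≠ 0 := by exact_mod_cast ht.ne'
    rw [Complex.cpow_sub _ _ htne, Complex.cpow_one]
    field_simp
  rwa [this] at h2


lemma hasFDerivAt_w (Z : Fin m → ℝ) :
    HasFDerivAt (fun Z : Fin m → ℝ => 1 - ∑ j, (Z j) ^ 2)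
      (-(∑ j : Fin m, (2 * Z j) • (ContinuousLinearMap.proj j : (Fin m → ℝ) →L[ℝ] ℝ))) Z := by
  simpa using (hasFDerivAt_const (1 : ℝ) Z).fun_sub (hasFDerivAt_q Z)

lemma hasFDerivAt_comp_w {f : ℝ → ℂ} {c : ℂ} {Z : Fin m → ℝ}
    (hf : HasDerivAt f c (1 - ∑ j, (Z j) ^ 2)) :
    HasFDerivAt (fun Z : Fin m → ℝ => f (1 - ∑ j, (Z j) ^ 2))
      ((ContinuousLinearMap.smulRight (1 : ℝ →L[ℝ] ℝ) c).comp
        (-(∑ j : Fin m, (2 * Z j) • (ContinuousLinearMap.proj j : (Fin m → ℝ) →L[ℝ] ℝ)))) Z :=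
  hf.hasFDerivAt.comp Z (hasFDerivAt_w Z)

lemma differentiableAt_comp_w {f : ℝ → ℂ} {c : ℂ} {Z : Fin m → ℝ}
    (hf : HasDerivAt f c (1 - ∑ j, (Z j) ^ 2)) :
    DifferentiableAt ℝ (fun Z : Fin m → ℝ => f (1 - ∑ j, (Z j) ^ 2)) Z :=
  (hasFDerivAt_comp_w hf).differentiableAt

lemma pd_comp_w {f : ℝ → ℂ} {c : ℂ} {Z : Fin m → ℝ}
    (hf : HasDerivAt f c (1 - ∑ j, (Z j) ^ 2)) (i : Fin m) :
    pd i (fun Z : Fin m → ℝ => f (1 - ∑ j, (Z j) ^ 2)) Z = c * (-2 * Z i) := by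
  rw [pd, (hasFDerivAt_comp_w hf).fderiv]
  simp [q_eval, Complex.real_smul, Pi.single_apply, apply_ite, mul_ite, ite_mul,
    Finset.sum_ite_eq']
  ring


variable {Y : Fin m → ℝ}

lemma pd_mul {F G : (Fin m → ℝ) → ℂ} (hF : DifferentiableAt ℝ F Y)
    (hG : DifferentiableAt ℝ G Y) (j : Fin m) :
    pd j (fun Z => F Z * G Z) Y = pd j F Y * G Y + F Y * pd j G Y := by
  unfold pd
  rw [fderiv_fun_mul hF hG]
  simp only [ContinuousLinearMap.add_apply, ContinuousLinearMap.smul_apply, smul_eq_mul]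
  ring

lemma pd_add {F G : (Fin m → ℝ) → ℂ} (hF : DifferentiableAt ℝ F Y)
    (hG : DifferentiableAt ℝ G Y) (j : Fin m) :
    pd j (fun Z => F Z + G Z) Y = pd j F Y + pd j G Y := by
  unfold pd
  rw [fderiv_fun_add hF hG]
  simp

lemma pd_sub {F G : (Fin m → ℝ) → ℂ} (hF : DifferentiableAt ℝ F Y)
    (hG : DifferentiableAt ℝ G Y) (j : Fin m) :
    pd j (fun Z => F Z - G Z) Y = pd j F Y - pd j G Y := by
  unfold pd
  rw [fderiv_fun_sub hF hG]
  simp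

lemma pd_const_mul {F : (Fin m → ℝ) → ℂ} (c : ℂ) (hF : DifferentiableAt ℝ F Y) (j : Fin m) :
    pd j (fun Z => c * F Z) Y = c * pd j F Y := by
  unfold pd
  rw [fderiv_const_mul hF c]
  simp

lemma pd_const (c : ℂ) (j : Fin m) : pd j (fun _ : Fin m → ℝ => c) Y = 0 := by
  unfold pd
  rw [fderiv_fun_const]
  simp

lemma hasFDerivAt_co (i : Fin m) (Z : Fin m → ℝ) :
    HasFDerivAt (fun Z : Fin m → ℝ => ((Z i : ℝ) : ℂ))
      (Complex.ofRealCLM.comp (ContinuousLinearMap.proj i)) Z :=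
  Complex.ofRealCLM.hasFDerivAt.comp Z
    (ContinuousLinearMap.proj (R := ℝ) (φ := fun _ : Fin m => ℝ) i).hasFDerivAt

lemma diff_co (i : Fin m) : DifferentiableAt ℝ (fun Z : Fin m → ℝ => ((Z i : ℝ) : ℂ)) Y :=
  (hasFDerivAt_co i Y).differentiableAt

lemma pd_co (i : Fin m) : pd i (fun Z : Fin m → ℝ => ((Z i : ℝ) : ℂ)) Y = 1 := by
  rw [pd, (hasFDerivAt_co i Y).fderiv]
  simp

lemma hasFDerivAt_cq (Z : Fin m → ℝ) :
    HasFDerivAt (fun Z : Fin m → ℝ => ((∑ j, (Z j) ^ 2 : ℝ) : ℂ))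
      (Complex.ofRealCLM.comp
        (∑ j : Fin m, (2 * Z j) • (ContinuousLinearMap.proj j : (Fin m → ℝ) →L[ℝ] ℝ))) Z :=
  Complex.ofRealCLM.hasFDerivAt.comp Z (hasFDerivAt_q Z)

lemma diff_cq : DifferentiableAt ℝ (fun Z : Fin m → ℝ => ((∑ j, (Z j) ^ 2 : ℝ) : ℂ)) Y :=
  (hasFDerivAt_cq Y).differentiableAt

lemma pd_cq (i : Fin m) :
    pd i (fun Z : Fin m → ℝ => ((∑ j, (Z j) ^ 2 : ℝ) : ℂ)) Y = 2 * Y i := by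
  rw [pd, (hasFDerivAt_cq Y).fderiv]
  simp [q_eval, Pi.single_apply, apply_ite, mul_ite, ite_mul, Finset.sum_ite_eq']


/-- `(1-|Z|²)^a` -/
noncomputable def TA {m : ℕ} (a : ℂ) (Z : Fin m → ℝ) : ℂ := ((1 - ∑ j, (Z j) ^ 2 : ℝ) : ℂ) ^ a
/-- `log (1-|Z|²)` -/
noncomputable def LG {m : ℕ} (Z : Fin m → ℝ) : ℂ := ((Real.log (1 - ∑ j, (Z j) ^ 2) : ℝ) : ℂ)
/-- `(1-|Z|²)` -/
def WC {m : ℕ} (Z : Fin m → ℝ) : ℂ := ((1 - ∑ j, (Z j) ^ 2 : ℝ) : ℂ)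
/-- `|Z|²` -/
def QC {m : ℕ} (Z : Fin m → ℝ) : ℂ := ((∑ j, (Z j) ^ 2 : ℝ) : ℂ)

variable {Z : Fin m → ℝ}

lemma pd_TA (a : ℂ) (hw : 0 < 1 - ∑ j, (Z j) ^ 2) (i : Fin m) :
    pd i (TA a) Z = a * TA (a - 1) Z * (-2 * Z i) :=
  pd_comp_w (hasDerivAt_ofReal_cpow a hw) i

lemma diff_TA (a : ℂ) (hw : 0 < 1 - ∑ j, (Z j) ^ 2) :
    DifferentiableAt ℝ (TA (m := m) a) Z :=
  differentiableAt_comp_w (hasDerivAt_ofReal_cpow a hw)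

lemma pd_LG (hw : 0 < 1 - ∑ j, (Z j) ^ 2) (i : Fin m) :
    pd i LG Z = (WC Z)⁻¹ * (-2 * Z i) :=
  pd_comp_w (hasDerivAt_ofReal_log hw) i

lemma diff_LG (hw : 0 < 1 - ∑ j, (Z j) ^ 2) :
    DifferentiableAt ℝ (LG (m := m)) Z :=
  differentiableAt_comp_w (hasDerivAt_ofReal_log hw)

lemma WC_ne (hw : 0 < 1 - ∑ j, (Z j) ^ 2) : WC Z ≠ 0 := by
  simp only [WC]
  exact_mod_cast hw.ne'

lemma TA_mul_inv (a : ℂ) (hw : 0 < 1 - ∑ j, (Z j) ^ 2) :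
    TA a Z * (WC Z)⁻¹ = TA (a - 1) Z := by
  have hne : ((1 - ∑ j, (Z j) ^ 2 : ℝ) : ℂ) ≠ 0 := by exact_mod_cast hw.ne'
  simp only [TA, WC]
  rw [Complex.cpow_sub _ _ hne, Complex.cpow_one, div_eq_mul_inv]

lemma TA_succ (a : ℂ) (hw : 0 < 1 - ∑ j, (Z j) ^ 2) :
    TA a Z = TA (a - 1) Z * WC Z := by
  have hne : ((1 - ∑ j, (Z j) ^ 2 : ℝ) : ℂ) ≠ 0 := by exact_mod_cast hw.ne'
  simp only [TA, WC]
  rw [Complex.cpow_sub _ _ hne, Complex.cpow_one, div_mul_cancel₀ _ hne]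

lemma QC_eq (Z : Fin m → ℝ) : QC Z = 1 - WC Z := by
  simp [QC, WC]

lemma sum_co_sq (Z : Fin m → ℝ) : ∑ j, ((Z j : ℝ) : ℂ) ^ 2 = QC Z := by
  rw [QC]
  push_cast
  rfl

lemma pd_mul3 {F G H : (Fin m → ℝ) → ℂ} {Y : Fin m → ℝ} (hF : DifferentiableAt ℝ F Y)
    (hG : DifferentiableAt ℝ G Y) (hH : DifferentiableAt ℝ H Y) (j : Fin m) :
    pd j (fun Z => F Z * G Z * H Z) Y
      = pd j F Y * G Y * H Y + F Y * pd j G Y * H Y + F Y * G Y * pd j H Y := by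
  rw [pd_mul (hF.fun_mul hG) hH, pd_mul hF hG]
  ring

lemma pd_mul4 {F G H K : (Fin m → ℝ) → ℂ} {Y : Fin m → ℝ} (hF : DifferentiableAt ℝ F Y)
    (hG : DifferentiableAt ℝ G Y) (hH : DifferentiableAt ℝ H Y)
    (hK : DifferentiableAt ℝ K Y) (j : Fin m) :
    pd j (fun Z => F Z * G Z * H Z * K Z) Y
      = pd j F Y * G Y * H Y * K Y + F Y * pd j G Y * H Y * K Y
        + F Y * G Y * pd j H Y * K Y + F Y * G Y * H Y * pd j K Y := by
  rw [pd_mul ((hF.fun_mul hG).fun_mul hH) hK, pd_mul3 hF hG hH]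
  ring


lemma isOpen_ball : IsOpen {Z : Fin m → ℝ | ∑ j, (Z j) ^ 2 < 1} :=
  isOpen_lt (continuous_finset_sum _ fun j _ => (continuous_apply j).pow 2) continuous_const

lemma pd_QC {Y : Fin m → ℝ} (i : Fin m) : pd i (QC (m := m)) Y = 2 * Y i := pd_cq i

lemma diff_QC {Y : Fin m → ℝ} : DifferentiableAt ℝ (QC (m := m)) Y := diff_cq

end S13

open S13

/-- the `k = 1` logarithmic conjugation identity on the open unit ball:
`P_σ((1−|Y|²)^s log(1−|Y|²) u)
  = log(1−|Y|²)·(1−|Y|²)^s·[4s(s−σ)(1−|Y|²)^{−1}u + P_{σ−2s}u]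
    + (1−|Y|²)^s·[4(2s−σ)(1−|Y|²)^{−1}u − 4(Eu + (2s−σ+(n−1)/2)u)]`. -/
theorem stmt13 (n : ℕ) (hn : 2 ≤ n) (lam σ s : ℂ)
    (u : (Fin (n - 1) → ℝ) → ℂ)
    (hu : ContDiffOn ℝ (⊤ : ℕ∞) u {Y : Fin (n - 1) → ℝ | ∑ j, (Y j) ^ 2 < 1}) :
    ∀ Y ∈ {Y : Fin (n - 1) → ℝ | ∑ j, (Y j) ^ 2 < 1},
      Pop n lam σ
          (fun Z => (((1 - ∑ j, (Z j) ^ 2 : ℝ)) : ℂ) ^ s *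
            (Real.log (1 - ∑ j, (Z j) ^ 2) : ℂ) * u Z) Y
        = (Real.log (1 - ∑ j, (Y j) ^ 2) : ℂ) *
            ((((1 - ∑ j, (Y j) ^ 2 : ℝ)) : ℂ) ^ s *
              (4 * s * (s - σ) * (((1 - ∑ j, (Y j) ^ 2 : ℝ)) : ℂ)⁻¹ * u Y
                + Pop n lam (σ - 2 * s) u Y))
          + (((1 - ∑ j, (Y j) ^ 2 : ℝ)) : ℂ) ^ s *
              (4 * (2 * s - σ) * (((1 - ∑ j, (Y j) ^ 2 : ℝ)) : ℂ)⁻¹ * u Y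
                - 4 * (euler u Y + (2 * s - σ + ((n : ℂ) - 1) / 2) * u Y)) := by
  intro Y hY
  have hYlt : ∑ j, (Y j) ^ 2 < 1 := hY
  have hwY : 0 < 1 - ∑ j, (Y j) ^ 2 := by linarith
  have hSopen : IsOpen {Z : Fin (n - 1) → ℝ | ∑ j, (Z j) ^ 2 < 1} := isOpen_ball
  have hnhds : {Z : Fin (n - 1) → ℝ | ∑ j, (Z j) ^ 2 < 1} ∈ nhds Y := hSopen.mem_nhds hY
  -- differentiability of the u-symbols
  have hud : ∀ Z : Fin (n - 1) → ℝ, ∑ j, (Z j) ^ 2 < 1 → DifferentiableAt ℝ u Z :=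
    fun Z hZ => (hu.contDiffAt (hSopen.mem_nhds hZ)).differentiableAt (by simp)
  have hpdusm : ∀ i : Fin (n - 1),
      ContDiffOn ℝ (⊤ : ℕ∞) (pd i u) {Z : Fin (n - 1) → ℝ | ∑ j, (Z j) ^ 2 < 1} := by
    intro i
    exact (hu.fderiv_of_isOpen hSopen (by exact_mod_cast le_top)).clm_apply contDiffOn_const
  have hpdud : ∀ (i : Fin (n - 1)) (Z : Fin (n - 1) → ℝ), ∑ j, (Z j) ^ 2 < 1 →
      DifferentiableAt ℝ (pd i u) Z :=
    fun i Z hZ => ((hpdusm i).contDiffAt (hSopen.mem_nhds hZ)).differentiableAt (by simp)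
  have heud : ∀ Z : Fin (n - 1) → ℝ, ∑ j, (Z j) ^ 2 < 1 → DifferentiableAt ℝ (euler u) Z := by
    intro Z hZ
    exact DifferentiableAt.fun_sum fun j _ => (diff_co j).mul (hpdud j Z hZ)
  -- Layer 1 : first derivatives of g
  have hL1 : ∀ Z : Fin (n - 1) → ℝ, ∑ j, (Z j) ^ 2 < 1 → ∀ j : Fin (n - 1),
      pd j (fun Z => TA s Z * LG Z * u Z) Z
        = (-2 * s) * (TA (s - 1) Z * LG Z * u Z * ((Z j : ℝ) : ℂ))
          - 2 * (TA (s - 1) Z * u Z * ((Z j : ℝ) : ℂ))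
          + TA s Z * LG Z * pd j u Z := by
    intro Z hZ j
    have hw : 0 < 1 - ∑ j, (Z j) ^ 2 := by
      have : ∑ j, (Z j) ^ 2 < 1 := hZ
      linarith
    rw [pd_mul3 (diff_TA s hw) (diff_LG hw) (hud Z hZ) j, pd_TA s hw j, pd_LG hw j]
    linear_combination (-2 * (Z j : ℂ) * u Z) * TA_mul_inv s hw
  -- Layer 2 : Euler applied to g
  have hL2 : ∀ Z : Fin (n - 1) → ℝ, ∑ j, (Z j) ^ 2 < 1 →
      euler (fun Z => TA s Z * LG Z * u Z) Z
        = (-2 * s) * (QC Z * TA (s - 1) Z * LG Z * u Z)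
          - 2 * (QC Z * TA (s - 1) Z * u Z)
          + TA s Z * LG Z * euler u Z := by
    intro Z hZ
    rw [euler]
    have hterm : ∀ j : Fin (n - 1), ((Z j : ℝ) : ℂ) * pd j (fun Z => TA s Z * LG Z * u Z) Z
        = ((-2 * s) * (TA (s - 1) Z * LG Z * u Z) - 2 * (TA (s - 1) Z * u Z)) * ((Z j : ℝ) : ℂ) ^ 2
          + TA s Z * LG Z * (((Z j : ℝ) : ℂ) * pd j u Z) := by
      intro j
      rw [hL1 Z hZ j]
      ring
    rw [Finset.sum_congr rfl fun j _ => hterm j, Finset.sum_add_distrib,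
      ← Finset.mul_sum, ← Finset.mul_sum, sum_co_sq]
    rw [euler]
    ring
  -- differentiability shortcuts at Y
  have dTA : ∀ a : ℂ, DifferentiableAt ℝ (TA (m := n - 1) a) Y := fun a => diff_TA a hwY
  have dLG : DifferentiableAt ℝ (LG (m := n - 1)) Y := diff_LG hwY
  have dU : DifferentiableAt ℝ u Y := hud Y hY
  have dpdU : ∀ i : Fin (n - 1), DifferentiableAt ℝ (pd i u) Y := fun i => hpdud i Y hY
  have dEU : DifferentiableAt ℝ (euler u) Y := heud Y hY
  -- Layer 3 : pure second derivatives, pointwise at Y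
  have hper : ∀ j : Fin (n - 1), pd j (pd j (fun Z => TA s Z * LG Z * u Z)) Y
      = (-2 * s) * ((s - 1) * TA (s - 2) Y * (-2 * Y j) * LG Y * u Y * ((Y j : ℝ) : ℂ)
           + TA (s - 1) Y * ((WC Y)⁻¹ * (-2 * Y j)) * u Y * ((Y j : ℝ) : ℂ)
           + TA (s - 1) Y * LG Y * pd j u Y * ((Y j : ℝ) : ℂ)
           + TA (s - 1) Y * LG Y * u Y * 1)
        - 2 * ((s - 1) * TA (s - 2) Y * (-2 * Y j) * u Y * ((Y j : ℝ) : ℂ)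
           + TA (s - 1) Y * pd j u Y * ((Y j : ℝ) : ℂ)
           + TA (s - 1) Y * u Y * 1)
        + (s * TA (s - 1) Y * (-2 * Y j) * LG Y * pd j u Y
           + TA s Y * ((WC Y)⁻¹ * (-2 * Y j)) * pd j u Y
           + TA s Y * LG Y * pd j (pd j u) Y) := by
    intro j
    have hev : pd j (fun Z => TA s Z * LG Z * u Z)
        =ᶠ[nhds Y] (fun Z => (-2 * s) * (TA (s - 1) Z * LG Z * u Z * ((Z j : ℝ) : ℂ))
          - 2 * (TA (s - 1) Z * u Z * ((Z j : ℝ) : ℂ)) + TA s Z * LG Z * pd j u Z) := by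
      filter_upwards [hnhds] with Z hZ
      exact hL1 Z hZ j
    have hstep : pd j (pd j (fun Z => TA s Z * LG Z * u Z)) Y
        = pd j (fun Z => (-2 * s) * (TA (s - 1) Z * LG Z * u Z * ((Z j : ℝ) : ℂ))
          - 2 * (TA (s - 1) Z * u Z * ((Z j : ℝ) : ℂ)) + TA s Z * LG Z * pd j u Z) Y :=
      congrArg (fun L : (Fin (n - 1) → ℝ) →L[ℝ] ℂ => L (Pi.single j 1)) hev.fderiv_eq
    rw [hstep]
    rw [pd_add
      (((((dTA (s - 1)).fun_mul dLG).fun_mul dU).fun_mul (diff_co j)).const_mul (-2 * s) |>.fun_sub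
        ((((dTA (s - 1)).fun_mul dU).fun_mul (diff_co j)).const_mul 2))
      (((dTA s).fun_mul dLG).fun_mul (dpdU j)) j]
    rw [pd_sub
      (((((dTA (s - 1)).fun_mul dLG).fun_mul dU).fun_mul (diff_co j)).const_mul (-2 * s))
      ((((dTA (s - 1)).fun_mul dU).fun_mul (diff_co j)).const_mul 2) j]
    rw [pd_const_mul (-2 * s) ((((dTA (s - 1)).fun_mul dLG).fun_mul dU).fun_mul (diff_co j)) j]
    rw [pd_const_mul 2 (((dTA (s - 1)).fun_mul dU).fun_mul (diff_co j)) j]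
    rw [pd_mul4 (dTA (s - 1)) dLG dU (diff_co j) j]
    rw [pd_mul3 (dTA (s - 1)) dU (diff_co j) j]
    rw [pd_mul3 (dTA s) dLG (dpdU j) j]
    rw [pd_TA (s - 1) hwY j, pd_TA s hwY j, pd_LG hwY j, pd_co j,
      show (s - 1 - 1 : ℂ) = s - 2 from by ring]
  -- Layer 3' : the Laplacian of g
  have hlap : lap (fun Z => TA s Z * LG Z * u Z) Y
      = (4 * s * (s - 1) * TA (s - 2) Y * LG Y * u Y + 4 * s * TA (s - 1) Y * (WC Y)⁻¹ * u Y
          + 4 * (s - 1) * TA (s - 2) Y * u Y) * QC Y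
        + (-4 * s * TA (s - 1) Y * LG Y - 2 * TA (s - 1) Y - 2 * TA s Y * (WC Y)⁻¹) * euler u Y
        + TA s Y * LG Y * lap u Y
        + ((n - 1 : ℕ) : ℂ) * (-2 * s * TA (s - 1) Y * LG Y * u Y - 2 * TA (s - 1) Y * u Y) := by
    rw [lap]
    have hterm : ∀ j : Fin (n - 1), pd j (pd j (fun Z => TA s Z * LG Z * u Z)) Y
        = (4 * s * (s - 1) * TA (s - 2) Y * LG Y * u Y + 4 * s * TA (s - 1) Y * (WC Y)⁻¹ * u Y
            + 4 * (s - 1) * TA (s - 2) Y * u Y) * ((Y j : ℝ) : ℂ) ^ 2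
          + (-4 * s * TA (s - 1) Y * LG Y - 2 * TA (s - 1) Y - 2 * TA s Y * (WC Y)⁻¹)
              * (((Y j : ℝ) : ℂ) * pd j u Y)
          + TA s Y * LG Y * pd j (pd j u) Y
          + (-2 * s * TA (s - 1) Y * LG Y * u Y - 2 * TA (s - 1) Y * u Y) := by
      intro j
      rw [hper j]
      ring
    rw [Finset.sum_congr rfl fun j _ => hterm j]
    rw [Finset.sum_add_distrib, Finset.sum_add_distrib, Finset.sum_add_distrib,
      ← Finset.mul_sum, ← Finset.mul_sum, ← Finset.mul_sum, sum_co_sq,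
      Finset.sum_const, Finset.card_univ, Fintype.card_fin, nsmul_eq_mul]
    rw [euler, lap]
  -- Layer 4 : Euler applied to (euler g - σ g)
  have hVev : (fun Z => euler (fun W => TA s W * LG W * u W) Z - σ * (TA s Z * LG Z * u Z))
      =ᶠ[nhds Y] (fun Z => ((-2 * s) * (QC Z * TA (s - 1) Z * LG Z * u Z)
            - 2 * (QC Z * TA (s - 1) Z * u Z))
          + (TA s Z * LG Z * euler u Z - σ * (TA s Z * LG Z * u Z))) := by
    filter_upwards [hnhds] with Z hZ
    rw [hL2 Z hZ]
    ring
  have hpdV : ∀ i : Fin (n - 1),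
      pd i (fun Z => euler (fun W => TA s W * LG W * u W) Z - σ * (TA s Z * LG Z * u Z)) Y
        = (-2 * s) * ((2 * Y i) * TA (s - 1) Y * LG Y * u Y
            + QC Y * ((s - 1) * TA (s - 2) Y * (-2 * Y i)) * LG Y * u Y
            + QC Y * TA (s - 1) Y * ((WC Y)⁻¹ * (-2 * Y i)) * u Y
            + QC Y * TA (s - 1) Y * LG Y * pd i u Y)
          - 2 * ((2 * Y i) * TA (s - 1) Y * u Y
            + QC Y * ((s - 1) * TA (s - 2) Y * (-2 * Y i)) * u Y
            + QC Y * TA (s - 1) Y * pd i u Y)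
          + ((s * TA (s - 1) Y * (-2 * Y i)) * LG Y * euler u Y
            + TA s Y * ((WC Y)⁻¹ * (-2 * Y i)) * euler u Y
            + TA s Y * LG Y * pd i (euler u) Y)
          - σ * ((s * TA (s - 1) Y * (-2 * Y i)) * LG Y * u Y
            + TA s Y * ((WC Y)⁻¹ * (-2 * Y i)) * u Y
            + TA s Y * LG Y * pd i u Y) := by
    intro i
    have hstep : pd i (fun Z => euler (fun W => TA s W * LG W * u W) Z
          - σ * (TA s Z * LG Z * u Z)) Y
        = pd i (fun Z => ((-2 * s) * (QC Z * TA (s - 1) Z * LG Z * u Z)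
            - 2 * (QC Z * TA (s - 1) Z * u Z))
          + (TA s Z * LG Z * euler u Z - σ * (TA s Z * LG Z * u Z))) Y :=
      congrArg (fun L : (Fin (n - 1) → ℝ) →L[ℝ] ℂ => L (Pi.single i 1)) hVev.fderiv_eq
    rw [hstep]
    rw [pd_add
      ((((diff_QC.fun_mul (dTA (s - 1))).fun_mul dLG).fun_mul dU).const_mul (-2 * s) |>.fun_sub
        (((diff_QC.fun_mul (dTA (s - 1))).fun_mul dU).const_mul 2))
      ((((dTA s).fun_mul dLG).fun_mul dEU).fun_sub ((((dTA s).fun_mul dLG).fun_mul dU).const_mul σ)) i]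
    rw [pd_sub ((((diff_QC.fun_mul (dTA (s - 1))).fun_mul dLG).fun_mul dU).const_mul (-2 * s))
      (((diff_QC.fun_mul (dTA (s - 1))).fun_mul dU).const_mul 2) i]
    rw [pd_sub (((dTA s).fun_mul dLG).fun_mul dEU) ((((dTA s).fun_mul dLG).fun_mul dU).const_mul σ) i]
    rw [pd_const_mul (-2 * s) (((diff_QC.fun_mul (dTA (s - 1))).fun_mul dLG).fun_mul dU) i]
    rw [pd_const_mul 2 ((diff_QC.fun_mul (dTA (s - 1))).fun_mul dU) i]
    rw [pd_const_mul σ (((dTA s).fun_mul dLG).fun_mul dU) i]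
    rw [pd_mul4 diff_QC (dTA (s - 1)) dLG dU i]
    rw [pd_mul3 diff_QC (dTA (s - 1)) dU i]
    rw [pd_mul3 (dTA s) dLG dEU i]
    rw [pd_mul3 (dTA s) dLG dU i]
    rw [pd_TA (s - 1) hwY i, pd_TA s hwY i, pd_LG hwY i, pd_QC i,
      show (s - 1 - 1 : ℂ) = s - 2 from by ring]
    ring
  have heulerV : euler (fun Z => euler (fun W => TA s W * LG W * u W) Z
        - σ * (TA s Z * LG Z * u Z)) Y
      = ((-4 * s) * TA (s - 1) Y * LG Y * u Y
          + 4 * s * (s - 1) * QC Y * TA (s - 2) Y * LG Y * u Y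
          + 4 * s * QC Y * TA (s - 1) Y * (WC Y)⁻¹ * u Y
          - 4 * TA (s - 1) Y * u Y
          + 4 * (s - 1) * QC Y * TA (s - 2) Y * u Y
          - 2 * s * TA (s - 1) Y * LG Y * euler u Y
          - 2 * TA s Y * (WC Y)⁻¹ * euler u Y
          + 2 * σ * s * TA (s - 1) Y * LG Y * u Y
          + 2 * σ * TA s Y * (WC Y)⁻¹ * u Y) * QC Y
        + ((-2 * s) * QC Y * TA (s - 1) Y * LG Y - 2 * QC Y * TA (s - 1) Y
            - σ * TA s Y * LG Y) * euler u Y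
        + TA s Y * LG Y * euler (euler u) Y := by
    rw [euler]
    have hterm : ∀ i : Fin (n - 1),
        ((Y i : ℝ) : ℂ) * pd i (fun Z => euler (fun W => TA s W * LG W * u W) Z
            - σ * (TA s Z * LG Z * u Z)) Y
          = ((-4 * s) * TA (s - 1) Y * LG Y * u Y
              + 4 * s * (s - 1) * QC Y * TA (s - 2) Y * LG Y * u Y
              + 4 * s * QC Y * TA (s - 1) Y * (WC Y)⁻¹ * u Y
              - 4 * TA (s - 1) Y * u Y
              + 4 * (s - 1) * QC Y * TA (s - 2) Y * u Y
              - 2 * s * TA (s - 1) Y * LG Y * euler u Y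
              - 2 * TA s Y * (WC Y)⁻¹ * euler u Y
              + 2 * σ * s * TA (s - 1) Y * LG Y * u Y
              + 2 * σ * TA s Y * (WC Y)⁻¹ * u Y) * ((Y i : ℝ) : ℂ) ^ 2
            + ((-2 * s) * QC Y * TA (s - 1) Y * LG Y - 2 * QC Y * TA (s - 1) Y
                - σ * TA s Y * LG Y) * (((Y i : ℝ) : ℂ) * pd i u Y)
            + TA s Y * LG Y * (((Y i : ℝ) : ℂ) * pd i (euler u) Y) := by
      intro i
      rw [hpdV i]
      ring
    rw [Finset.sum_congr rfl fun i _ => hterm i, Finset.sum_add_distrib,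
      Finset.sum_add_distrib, ← Finset.mul_sum, ← Finset.mul_sum, ← Finset.mul_sum, sum_co_sq]
    have e1 : ∑ i : Fin (n - 1), ((Y i : ℝ) : ℂ) * pd i u Y = euler u Y := rfl
    have e2 : ∑ i : Fin (n - 1), ((Y i : ℝ) : ℂ) * pd i (euler u) Y = euler (euler u) Y := rfl
    rw [e1, e2]
  -- the linear expansion used on the right-hand side
  have hlin : euler (fun Z => euler u Z - (σ - 2 * s) * u Z) Y
      = euler (euler u) Y - (σ - 2 * s) * euler u Y := by
    rw [euler]
    have hterm : ∀ i : Fin (n - 1),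
        ((Y i : ℝ) : ℂ) * pd i (fun Z => euler u Z - (σ - 2 * s) * u Z) Y
          = ((Y i : ℝ) : ℂ) * pd i (euler u) Y
            - (σ - 2 * s) * (((Y i : ℝ) : ℂ) * pd i u Y) := by
      intro i
      rw [pd_sub dEU (dU.const_mul (σ - 2 * s)) i, pd_const_mul (σ - 2 * s) dU i]
      ring
    rw [Finset.sum_congr rfl fun i _ => hterm i, Finset.sum_sub_distrib, ← Finset.mul_sum]
    have e1 : ∑ i : Fin (n - 1), ((Y i : ℝ) : ℂ) * pd i u Y = euler u Y := rfl
    have e2 : ∑ i : Fin (n - 1), ((Y i : ℝ) : ℂ) * pd i (euler u) Y = euler (euler u) Y := rfl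
    rw [e1, e2]
  -- assembly
  have hfeq : (fun Z : Fin (n - 1) → ℝ => (((1 - ∑ j, (Z j) ^ 2 : ℝ)) : ℂ) ^ s *
      (Real.log (1 - ∑ j, (Z j) ^ 2) : ℂ) * u Z) = (fun Z => TA s Z * LG Z * u Z) := rfl
  rw [hfeq]
  rw [show (Real.log (1 - ∑ j, (Y j) ^ 2) : ℂ) = LG Y from rfl,
      show (((1 - ∑ j, (Y j) ^ 2 : ℝ)) : ℂ) ^ s = TA s Y from rfl,
      show (((1 - ∑ j, (Y j) ^ 2 : ℝ)) : ℂ)⁻¹ = (WC Y)⁻¹ from rfl]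
  simp only [Pop]
  rw [heulerV, hlin, hlap, hL2 Y hY]
  have h2 : TA (m := n - 1) (s - 1) Y = TA (s - 2) Y * WC Y := by
    have h := TA_succ (m := n - 1) (s - 1) hwY
    rwa [show (s - 1 - 1 : ℂ) = s - 2 from by ring] at h
  have h1 : TA (m := n - 1) s Y = TA (s - 1) Y * WC Y := TA_succ s hwY
  have hQ : QC (m := n - 1) Y = 1 - WC Y := QC_eq Y
  have hTne : WC (m := n - 1) Y ≠ 0 := WC_ne hwY
  have hcast : ((n - 1 : ℕ) : ℂ) = (n : ℂ) - 1 := by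
    rw [Nat.cast_sub (by omega), Nat.cast_one]
  rw [h1, h2, hQ, hcast]
  field_simp
  ring
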